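/- The symmetrized bidisc 𝔾₂ is an analytic retract of the tetrablock 𝔼: the maps θ : 𝔾₂ → 𝔼, (s,p) ↦ (s/2, s/2, p), and ι : 𝔼 → 𝔾₂, (x₁,x₂,x₃) ↦ (x₁+x₂, x₃), are well-defined holomorphic maps with ι ∘ θ = id_{𝔾₂}. -/

import Mathlib

open Complex Metric

private lemma normSq_key (u z : ℂ) :
    Complex.normSq (1 - u * z) - Complex.normSq (z - (starRingEnd ℂ) u)
      = (1 - Complex.normSq u) * (1 - Complex.normSq z) := by
  simp [Complex.normSq_apply, Complex.mul_re, Complex.mul_im, Complex.sub_re,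
    Complex.sub_im, Complex.one_re, Complex.one_im, Complex.conj_re, Complex.conj_im]
  ring

private lemma abs_sub_conj_le (u z : ℂ) (hu : ‖u‖ < 1) (hz : ‖z‖ ≤ 1) :
    ‖z - (starRingEnd ℂ) u‖ ≤ ‖1 - u * z‖ := by
  have h1 : Complex.normSq u < 1 := by
    have := Complex.sq_norm u; nlinarith [norm_nonneg u]
  have h2 : Complex.normSq z ≤ 1 := by
    have := Complex.sq_norm z; nlinarith [norm_nonneg z]
  have := normSq_key u z
  have h3 : Complex.normSq (z - (starRingEnd ℂ) u) ≤ Complex.normSq (1 - u * z) := by nlinarith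
  have := Complex.sq_norm (z - (starRingEnd ℂ) u)
  have := Complex.sq_norm (1 - u * z)
  nlinarith [norm_nonneg (z - (starRingEnd ℂ) u), norm_nonneg (1 - u * z)]

private lemma one_sub_mul_ne (u z : ℂ) (hu : ‖u‖ < 1) (hz : ‖z‖ ≤ 1) :
    1 - u * z ≠ 0 := by
  intro h
  have h1 : u * z = 1 := by linear_combination -h
  have h2 := congrArg norm h1
  rw [norm_mul, norm_one] at h2
  have := mul_le_of_le_one_right (norm_nonneg u) hz
  linarith

private lemma key_ne_zero (u v z₁ z₂ : ℂ) (hu : ‖u‖ < 1) (hv : ‖v‖ < 1)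
    (h1 : ‖z₁‖ ≤ 1) (h2 : ‖z₂‖ ≤ 1) :
    (1 - u * z₁) * (1 - v * z₂) + (1 - u * z₂) * (1 - v * z₁) ≠ 0 := by
  intro hK
  set cu := (starRingEnd ℂ) u with hcu
  have hiden : (1 - cu * u) *
      ((1 - u * z₁) * (1 - v * z₂) + (1 - u * z₂) * (1 - v * z₁))
      = 2*(1-cu*v)*((1-u*z₁)*(1-u*z₂))
        + (u-v)*((z₂-cu)*(1-u*z₁)+(z₁-cu)*(1-u*z₂)) := by ring
  rw [hK, mul_zero] at hiden
  have heq : 2*(1-cu*v)*((1-u*z₁)*(1-u*z₂))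
      = -((u-v)*((z₂-cu)*(1-u*z₁)+(z₁-cu)*(1-u*z₂))) := by linear_combination -hiden
  have hP1 : (0:ℝ) < ‖1 - u * z₁‖ :=
    (norm_pos_iff.mpr (one_sub_mul_ne u z₁ hu h1))
  have hP2 : (0:ℝ) < ‖1 - u * z₂‖ :=
    (norm_pos_iff.mpr (one_sub_mul_ne u z₂ hu h2))
  have hd1 : ‖z₁ - cu‖ ≤ ‖1 - u * z₁‖ := abs_sub_conj_le u z₁ hu h1
  have hd2 : ‖z₂ - cu‖ ≤ ‖1 - u * z₂‖ := abs_sub_conj_le u z₂ hu h2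
  have hlt : ‖u - v‖ < ‖1 - cu * v‖ := by
    have hnu : Complex.normSq u < 1 := by
      have := Complex.sq_norm u; nlinarith [norm_nonneg u]
    have hnv : Complex.normSq v < 1 := by
      have := Complex.sq_norm v; nlinarith [norm_nonneg v]
    have hns : Complex.normSq (1 - cu * v) - Complex.normSq (u - v)
        = (1 - Complex.normSq u) * (1 - Complex.normSq v) := by
      simp [Complex.normSq_apply, Complex.mul_re, Complex.mul_im, Complex.sub_re,
        Complex.sub_im, Complex.one_re, Complex.one_im, hcu, Complex.conj_re, Complex.conj_im]
      ring
    have := Complex.sq_norm (1 - cu * v)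
    have := Complex.sq_norm (u - v)
    nlinarith [norm_nonneg (1 - cu * v), norm_nonneg (u - v)]
  have hL := congrArg norm heq
  rw [norm_neg, norm_mul, norm_mul, norm_mul, norm_mul] at hL
  have hRle : ‖(z₂-cu)*(1-u*z₁)+(z₁-cu)*(1-u*z₂)‖
      ≤ 2 * (‖1 - u * z₁‖ * ‖1 - u * z₂‖) := by
    calc ‖(z₂-cu)*(1-u*z₁)+(z₁-cu)*(1-u*z₂)‖
        ≤ ‖(z₂-cu)*(1-u*z₁)‖ + ‖(z₁-cu)*(1-u*z₂)‖ :=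
          norm_add_le _ _
      _ ≤ 2 * (‖1 - u * z₁‖ * ‖1 - u * z₂‖) := by
          rw [norm_mul, norm_mul]
          nlinarith [norm_nonneg (z₂-cu), norm_nonneg (z₁-cu)]
  have habs2 : ‖(2:ℂ)‖ = 2 := by norm_num
  rw [habs2] at hL
  nlinarith [mul_le_mul_of_nonneg_left hRle (norm_nonneg (u-v)),
    mul_pos hP1 hP2,
    mul_lt_mul_of_pos_right hlt (mul_pos hP1 hP2)]

/-- The symmetrized bidisc `𝔾₂ = {(s,p) : 1 - s z + p z² ≠ 0 for all z ∈ 𝔻̄}`. -/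
def SymBidisc : Set (ℂ × ℂ) :=
  {x | ∀ z ∈ closedBall (0 : ℂ) 1, 1 - x.1 * z + x.2 * z ^ 2 ≠ 0}

/-- The tetrablock `𝔼 = {(x₁,x₂,x₃) : 1 - x₁z₁ - x₂z₂ + x₃z₁z₂ ≠ 0 for all z₁,z₂ ∈ 𝔻̄}`. -/
def Tetrablock : Set (ℂ × ℂ × ℂ) :=
  {x | ∀ z₁ ∈ closedBall (0 : ℂ) 1, ∀ z₂ ∈ closedBall (0 : ℂ) 1,
    1 - x.1 * z₁ - x.2.1 * z₂ + x.2.2 * z₁ * z₂ ≠ 0}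

private lemma root_lt_one {s p u v : ℂ} (h : (s, p) ∈ SymBidisc)
    (hs : u + v = s) (hp : u * v = p) : ‖u‖ < 1 := by
  by_contra hc
  push_neg at hc
  have hu0 : u ≠ 0 := by
    intro h0
    rw [h0, norm_zero] at hc; linarith
  have hmem : u⁻¹ ∈ closedBall (0:ℂ) 1 := by
    rw [mem_closedBall_zero_iff, norm_inv]
    rw [inv_le_one_iff₀]
    right
    exact hc
  have hne := h u⁻¹ hmem
  apply hne
  have hfac : 1 - (s, p).1 * u⁻¹ + (s, p).2 * u⁻¹ ^ 2
      = (1 - u * u⁻¹) * (1 - v * u⁻¹) := by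
    simp only
    linear_combination (u⁻¹) * hs - (u⁻¹^2) * hp
  rw [hfac, mul_inv_cancel₀ hu0]
  ring

private lemma symBidisc_factor {s p : ℂ} (h : (s, p) ∈ SymBidisc) :
    ∃ u v : ℂ, ‖u‖ < 1 ∧ ‖v‖ < 1 ∧ u + v = s ∧ u * v = p := by
  obtain ⟨w, hw⟩ := IsAlgClosed.exists_pow_nat_eq (k := ℂ) (s ^ 2 - 4 * p) (n := 2) two_pos
  refine ⟨(s + w) / 2, (s - w) / 2, ?_, ?_, by ring, by linear_combination (-1/4 : ℂ) * hw⟩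
  · exact root_lt_one (u := (s + w) / 2) (v := (s - w) / 2) h (by ring)
      (by linear_combination (-1/4 : ℂ) * hw)
  · exact root_lt_one (u := (s - w) / 2) (v := (s + w) / 2) h (by ring)
      (by linear_combination (-1/4 : ℂ) * hw)

/-- `𝔾₂` is an analytic retract of the tetrablock `𝔼` via
`θ(s,p) = (s/2, s/2, p)` and `ι(x₁,x₂,x₃) = (x₁+x₂, x₃)`. -/
theorem symBidisc_analytic_retract_tetrablock :
    ∃ (θ : ℂ × ℂ → ℂ × ℂ × ℂ) (ι : ℂ × ℂ × ℂ → ℂ × ℂ),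
      (∀ x : ℂ × ℂ, θ x = (x.1 / 2, x.1 / 2, x.2)) ∧
      (∀ y : ℂ × ℂ × ℂ, ι y = (y.1 + y.2.1, y.2.2)) ∧
      Set.MapsTo θ SymBidisc Tetrablock ∧
      Set.MapsTo ι Tetrablock SymBidisc ∧
      DifferentiableOn ℂ θ SymBidisc ∧
      DifferentiableOn ℂ ι Tetrablock ∧
      ∀ x ∈ SymBidisc, ι (θ x) = x := by
  refine ⟨fun x => (x.1 / 2, x.1 / 2, x.2), fun y => (y.1 + y.2.1, y.2.2),
    fun _ => rfl, fun _ => rfl, ?_, ?_, ?_, ?_, ?_⟩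
  · -- θ maps 𝔾₂ into 𝔼
    rintro ⟨s, p⟩ hx z₁ hz₁ z₂ hz₂
    obtain ⟨u, v, hu, hv, hs, hp⟩ := symBidisc_factor hx
    rw [mem_closedBall_zero_iff] at hz₁ hz₂
    have hkey := key_ne_zero u v z₁ z₂ hu hv hz₁ hz₂
    simp only
    intro h0
    apply hkey
    have heq2 : ((1 - u * z₁) * (1 - v * z₂) + (1 - u * z₂) * (1 - v * z₁)) =
        2 * (1 - (s, p).1 / 2 * z₁ - (s, p).1 / 2 * z₂ + (s, p).2 * z₁ * z₂) := by
      simp only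
      linear_combination (-(z₁ : ℂ) - z₂) * hs + (2 * z₁ * z₂) * hp
    rw [heq2, h0, mul_zero]
  · -- ι maps 𝔼 into 𝔾₂
    rintro ⟨x₁, x₂, x₃⟩ hy z hz
    have hz2 := hy z hz z hz
    simp only at hz2 ⊢
    intro h0
    apply hz2
    linear_combination h0
  · exact Differentiable.differentiableOn (by fun_prop)
  · exact Differentiable.differentiableOn (by fun_prop)
  · intro x _
    simp only
    rw [Prod.ext_iff]
    exact ⟨by ring, rfl⟩
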